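/- Let C = RP be a nonnegative factorization of a nonnegative matrix C with inner dimension k. If C contains an m×m submatrix C_m such that each column of C_m has a zero entry in a row position where all other columns of C_m are strictly positive, then the supports of the corresponding k-dimensional columns of P form an antichain of size m, and hence m ≤ binomial(k, ⌊k/2⌋). -/

import Mathlib

/-- If `C = R * P` is a nonnegative factorization and `C` contains an `m × m`
submatrix whose zero pattern is exactly the diagonal (entry `(r i, c j)` of `C`
vanishes iff `i = j`), then the supports of the corresponding columns of `P`
form an antichain of size `m`, whence `m ≤ C(k, ⌊k/2⌋)`. -/
theorem sparsity_lower_bound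
    {M N k m : ℕ}
    (C : Matrix (Fin M) (Fin N) ℝ)
    (R : Matrix (Fin M) (Fin k) ℝ) (P : Matrix (Fin k) (Fin N) ℝ)
    (hC : ∀ i j, 0 ≤ C i j)
    (hR : ∀ i j, 0 ≤ R i j) (hP : ∀ i j, 0 ≤ P i j)
    (hfac : C = R * P)
    (r : Fin m → Fin M) (c : Fin m → Fin N)
    (hpattern : ∀ i j, C (r i) (c j) = 0 ↔ i = j) :
    (∀ i j, i ≠ j →
      ¬ ({t | P t (c i) ≠ 0} ⊆ {t | P t (c j) ≠ 0})) ∧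
    m ≤ Nat.choose k (k / 2) := by
  -- key: if supports nested, the off-diagonal entry vanishes, contradiction
  have key : ∀ i j : Fin m, i ≠ j →
      ¬ ({t | P t (c i) ≠ 0} ⊆ {t | P t (c j) ≠ 0}) := by
    intro i j hij hsub
    have hjj : C (r j) (c j) = 0 := (hpattern j j).mpr rfl
    have hsum : ∑ t, R (r j) t * P t (c j) = 0 := by
      rw [hfac, Matrix.mul_apply] at hjj; exact hjj
    have hterm : ∀ t ∈ Finset.univ, R (r j) t * P t (c j) = 0 :=
      (Finset.sum_eq_zero_iff_of_nonneg
        (fun t _ => mul_nonneg (hR _ t) (hP t _))).mp hsum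
    have hji : C (r j) (c i) = 0 := by
      rw [hfac, Matrix.mul_apply]
      apply Finset.sum_eq_zero
      intro t _
      by_cases hPi : P t (c i) = 0
      · rw [hPi, mul_zero]
      · have hPj : P t (c j) ≠ 0 := hsub hPi
        have := hterm t (Finset.mem_univ t)
        have hRz : R (r j) t = 0 := by
          rcases mul_eq_zero.mp this with h | h
          · exact h
          · exact absurd h hPj
        rw [hRz, zero_mul]
    exact hij ((hpattern j i).mp hji).symm
  refine ⟨key, ?_⟩
  classical
  set S : Fin m → Finset (Fin k) := fun i => Finset.univ.filter (fun t => P t (c i) ≠ 0) with hS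
  have hmem : ∀ i t, t ∈ S i ↔ P t (c i) ≠ 0 := by
    intro i t; simp [hS]
  have hSsub : ∀ i j : Fin m, S i ⊆ S j →
      ({t | P t (c i) ≠ 0} ⊆ {t | P t (c j) ≠ 0}) := by
    intro i j h t ht
    exact (hmem j t).mp (h ((hmem i t).mpr ht))
  have hinj : Function.Injective S := by
    intro i j hij
    by_contra hne
    exact key i j hne (hSsub i j (le_of_eq hij))
  have hanti : IsAntichain (· ⊆ ·)
      ((Finset.univ.image S : Finset (Finset (Fin k))) : Set (Finset (Fin k))) := by
    intro a ha b hb hab hsub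
    simp only [Finset.coe_image, Finset.coe_univ, Set.image_univ, Set.mem_range] at ha hb
    obtain ⟨i, rfl⟩ := ha
    obtain ⟨j, rfl⟩ := hb
    have hij : i ≠ j := fun h => hab (by rw [h])
    exact key i j hij (hSsub i j hsub)
  have hcard : (Finset.univ.image S).card = m := by
    rw [Finset.card_image_of_injective _ hinj, Finset.card_univ, Fintype.card_fin]
  have := IsAntichain.sperner hanti
  rwa [hcard, Fintype.card_fin] at this
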